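/- arXiv:2302.14792 — 2 statements merged into one kernel-verified Lean document; each statement's English description precedes it below -/
import Mathlib

section
/- A point z ∈ (−∞,s) lies in the interior of some island in K = [−∞,s) if and only if there exists y ∈ (z,s) such that R(z) < R(y). -/
/-!
Islands (Section 3.3 of the paper).  `R` is a useful function with `max R(x) = R(x)` for all
`x`, `s ∈ ℝ`, and `R(-∞) = Rinf` is a fixed value with `R(z) ≤ Rinf` for all `z < s`.
A (red) island in `K = [-∞, s)` is an open interval `(x, y) ⊆ K` (with `x = -∞` allowed,
encoded by `⊥ : EReal`) as in the definition below.  Lemma 3.4 of the paper:  `z ∈ (-∞, s)`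
lies in the interior of an island iff `R(z) < R(y)` for some `y ∈ (z, s)`.
-/

noncomputable section

open Filter Topology

/-- `Δx⁻`, the indicator function of `[x, ∞)`. -/
def deltaMinus (x : ℝ) : ℝ → ℝ := Set.indicator (Set.Ici x) 1

/-- `Δx⁺`, the indicator function of `(x, ∞)`. -/
def deltaPlus (x : ℝ) : ℝ → ℝ := Set.indicator (Set.Ioi x) 1

/-- `F` is a useful function, with decomposition data `f` (continuous of bounded variation)
and coefficient families `um = (u_x⁻)`, `up = (u_x⁺)`. -/
structure IsUseful (F f um up : ℝ → ℝ) : Prop where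
  cont : Continuous f
  bddVar : BoundedVariationOn f Set.univ
  summable_um : Summable fun x : ℝ => |um x|
  summable_up : Summable fun x : ℝ => |up x|
  decomp : ∀ t : ℝ,
    F t = f t + (∑' x : ℝ, um x * deltaMinus x t) + (∑' x : ℝ, up x * deltaPlus x t)

/-- `max R (x) = R x` for every `x`, i.e. both one-sided limits are `≤ R x`. -/
def MaxEqSelf (R : ℝ → ℝ) : Prop :=
  ∀ a : ℝ, Function.leftLim R a ≤ R a ∧ Function.rightLim R a ≤ R a

/-- The value of `R` at a point of `[-∞, ∞)`, where `R(-∞) = Rinf`. -/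
def Rval (R : ℝ → ℝ) (Rinf : ℝ) (x : EReal) : ℝ :=
  if x = ⊥ then Rinf else R x.toReal

/-- `(x, y)` is a (red) island in `K = [-∞, s)`:  either
(i) `y = s`, `R(x) ≥ R₋(s)` and `R(z) < R₋(s)` for all `z ∈ (x, s)`; or
(ii) `y < s`, `R(x) ≥ R(y) ≥ R₋(s)`, `R(z) < R(y)` for all `z ∈ (x, y)`, and
`R(w) ≤ R(y)` for all `w ∈ (y, s)`. -/
def IsIsland (R : ℝ → ℝ) (Rinf s : ℝ) (x y : EReal) : Prop :=
  x < y ∧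
  ((y = (s : EReal) ∧ Function.leftLim R s ≤ Rval R Rinf x ∧
      ∀ z : ℝ, x < (z : EReal) → z < s → R z < Function.leftLim R s) ∨
   (∃ yr : ℝ, y = (yr : EReal) ∧ yr < s ∧
      R yr ≤ Rval R Rinf x ∧ Function.leftLim R s ≤ R yr ∧
      (∀ z : ℝ, x < (z : EReal) → (z : EReal) < y → R z < R yr) ∧
      (∀ w : ℝ, yr < w → w < s → R w ≤ R yr)))

/-! ### Auxiliary lemmas -/

lemma deltaMinus_eq (x t : ℝ) : deltaMinus x t = if x ≤ t then 1 else 0 := by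
  simp [deltaMinus, Set.indicator_apply, Set.mem_Ici]

lemma deltaPlus_eq (x t : ℝ) : deltaPlus x t = if x < t then 1 else 0 := by
  simp [deltaPlus, Set.indicator_apply, Set.mem_Ioi]

lemma deltaMinus_mem (x t : ℝ) : 0 ≤ deltaMinus x t ∧ deltaMinus x t ≤ 1 := by
  rw [deltaMinus_eq]; split_ifs <;> norm_num

lemma deltaPlus_mem (x t : ℝ) : 0 ≤ deltaPlus x t ∧ deltaPlus x t ≤ 1 := by
  rw [deltaPlus_eq]; split_ifs <;> norm_num

lemma deltaMinus_mono (x : ℝ) : Monotone (deltaMinus x) := by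
  intro a b hab
  rw [deltaMinus_eq, deltaMinus_eq]
  by_cases h1 : x ≤ a
  · rw [if_pos h1, if_pos (h1.trans hab)]
  · rw [if_neg h1]; split_ifs <;> norm_num

lemma deltaPlus_mono (x : ℝ) : Monotone (deltaPlus x) := by
  intro a b hab
  rw [deltaPlus_eq, deltaPlus_eq]
  by_cases h1 : x < a
  · rw [if_pos h1, if_pos (h1.trans_le hab)]
  · rw [if_neg h1]; split_ifs <;> norm_num

lemma summable_mul_delta {u : ℝ → ℝ} (hu : Summable fun x => |u x|)
    {d : ℝ → ℝ → ℝ} (hd : ∀ x t, 0 ≤ d x t ∧ d x t ≤ 1) (t : ℝ) :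
    Summable fun x => u x * d x t := by
  apply Summable.of_abs
  refine Summable.of_nonneg_of_le (fun x => abs_nonneg _) (fun x => ?_) hu
  rw [abs_mul]
  calc |u x| * |d x t| ≤ |u x| * 1 := by
        apply mul_le_mul_of_nonneg_left _ (abs_nonneg _)
        rw [abs_of_nonneg (hd x t).1]; exact (hd x t).2
    _ = |u x| := mul_one _

lemma summable_abs_max {u : ℝ → ℝ} (hu : Summable fun x => |u x|) :
    Summable fun x => |max (u x) 0| := by
  refine Summable.of_nonneg_of_le (fun x => abs_nonneg _) (fun x => ?_) hu
  rw [abs_of_nonneg (le_max_right _ _)]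
  exact max_le (le_abs_self _) (abs_nonneg _)

lemma summable_abs_max_neg {u : ℝ → ℝ} (hu : Summable fun x => |u x|) :
    Summable fun x => |max (-u x) 0| := by
  refine Summable.of_nonneg_of_le (fun x => abs_nonneg _) (fun x => ?_) hu
  rw [abs_of_nonneg (le_max_right _ _)]
  exact max_le (neg_le_abs _) (abs_nonneg _)

lemma monotone_tsum_mul_delta {u : ℝ → ℝ} (hu : Summable fun x => |u x|)
    (hu0 : ∀ x, 0 ≤ u x) {d : ℝ → ℝ → ℝ} (hd : ∀ x t, 0 ≤ d x t ∧ d x t ≤ 1)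
    (hdm : ∀ x, Monotone (d x)) :
    Monotone (fun t => ∑' x, u x * d x t) := by
  intro a b hab
  exact Summable.tsum_le_tsum (fun x => mul_le_mul_of_nonneg_left (hdm x hab) (hu0 x))
    (summable_mul_delta hu hd a) (summable_mul_delta hu hd b)

/-- A useful function tends to its left limit from the left and to its right limit from the
right, at every point. -/
lemma useful_tendsto {R f um up : ℝ → ℝ} (h : IsUseful R f um up) (a : ℝ) :
    Tendsto R (𝓝[<] a) (𝓝 (Function.leftLim R a)) ∧
      Tendsto R (𝓝[>] a) (𝓝 (Function.rightLim R a)) := by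
  have hdm : ∀ x t, 0 ≤ deltaMinus x t ∧ deltaMinus x t ≤ 1 := deltaMinus_mem
  have hdp : ∀ x t, 0 ≤ deltaPlus x t ∧ deltaPlus x t ≤ 1 := deltaPlus_mem
  set P : ℝ → ℝ := fun t =>
    (∑' x, max (um x) 0 * deltaMinus x t) + (∑' x, max (up x) 0 * deltaPlus x t) with hP
  set Q : ℝ → ℝ := fun t =>
    (∑' x, max (-um x) 0 * deltaMinus x t) + (∑' x, max (-up x) 0 * deltaPlus x t) with hQ
  have hsm := summable_abs_max h.summable_um
  have hsmn := summable_abs_max_neg h.summable_um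
  have hsp := summable_abs_max h.summable_up
  have hspn := summable_abs_max_neg h.summable_up
  have hPmono : Monotone P :=
    (monotone_tsum_mul_delta hsm (fun x => le_max_right _ _) hdm deltaMinus_mono).add
      (monotone_tsum_mul_delta hsp (fun x => le_max_right _ _) hdp deltaPlus_mono)
  have hQmono : Monotone Q :=
    (monotone_tsum_mul_delta hsmn (fun x => le_max_right _ _) hdm deltaMinus_mono).add
      (monotone_tsum_mul_delta hspn (fun x => le_max_right _ _) hdp deltaPlus_mono)
  have hRPQ : ∀ t, R t = f t + (P t - Q t) := by
    intro t
    have e1 : (∑' x, um x * deltaMinus x t)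
        = (∑' x, max (um x) 0 * deltaMinus x t) - (∑' x, max (-um x) 0 * deltaMinus x t) := by
      rw [← Summable.tsum_sub (summable_mul_delta hsm hdm t) (summable_mul_delta hsmn hdm t)]
      congr 1; funext x
      rw [← sub_mul, max_zero_sub_max_neg_zero_eq_self]
    have e2 : (∑' x, up x * deltaPlus x t)
        = (∑' x, max (up x) 0 * deltaPlus x t) - (∑' x, max (-up x) 0 * deltaPlus x t) := by
      rw [← Summable.tsum_sub (summable_mul_delta hsp hdp t) (summable_mul_delta hspn hdp t)]
      congr 1; funext x
      rw [← sub_mul, max_zero_sub_max_neg_zero_eq_self]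
    rw [h.decomp t, e1, e2, hP, hQ]; ring
  have hRfun : R = fun t => f t + (P t - Q t) := funext hRPQ
  constructor
  · have hf : Tendsto f (𝓝[<] a) (𝓝 (f a)) := (h.cont.tendsto a).mono_left nhdsWithin_le_nhds
    have hT : Tendsto R (𝓝[<] a)
        (𝓝 (f a + (Function.leftLim P a - Function.leftLim Q a))) := by
      rw [hRfun]
      exact hf.add ((hPmono.tendsto_leftLim a).sub (hQmono.tendsto_leftLim a))
    have hne : 𝓝[<] a ≠ ⊥ := (nhdsLT_neBot a).ne
    rw [leftLim_eq_of_tendsto hT]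
    exact hT
  · have hf : Tendsto f (𝓝[>] a) (𝓝 (f a)) := (h.cont.tendsto a).mono_left nhdsWithin_le_nhds
    have hT : Tendsto R (𝓝[>] a)
        (𝓝 (f a + (Function.rightLim P a - Function.rightLim Q a))) := by
      rw [hRfun]
      exact hf.add ((hPmono.tendsto_rightLim a).sub (hQmono.tendsto_rightLim a))
    have hne : 𝓝[>] a ≠ ⊥ := (nhdsGT_neBot a).ne
    rw [rightLim_eq_of_tendsto hT]
    exact hT

/-- A useful function is bounded above on compact intervals. -/
lemma useful_bddAbove {R f um up : ℝ → ℝ} (h : IsUseful R f um up) (a b : ℝ) :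
    ∃ C : ℝ, ∀ t ∈ Set.Icc a b, R t ≤ C := by
  rcases le_or_gt a b with hab | hab
  · have hfb : BddAbove (f '' Set.Icc a b) :=
      (isCompact_Icc.image_of_continuousOn h.cont.continuousOn).bddAbove
    obtain ⟨Cf, hCf⟩ := hfb
    refine ⟨Cf + (∑' x, |um x|) + (∑' x, |up x|), fun t ht => ?_⟩
    rw [h.decomp t]
    have h1 : f t ≤ Cf := hCf (Set.mem_image_of_mem f ht)
    have h2 : (∑' x, um x * deltaMinus x t) ≤ ∑' x, |um x| := by
      refine Summable.tsum_le_tsum (fun x => ?_) (summable_mul_delta h.summable_um deltaMinus_mem t)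
        h.summable_um
      calc um x * deltaMinus x t ≤ |um x * deltaMinus x t| := le_abs_self _
        _ ≤ |um x| := by
            rw [abs_mul]
            calc |um x| * |deltaMinus x t| ≤ |um x| * 1 := by
                  apply mul_le_mul_of_nonneg_left _ (abs_nonneg _)
                  rw [abs_of_nonneg (deltaMinus_mem x t).1]; exact (deltaMinus_mem x t).2
              _ = |um x| := mul_one _
    have h3 : (∑' x, up x * deltaPlus x t) ≤ ∑' x, |up x| := by
      refine Summable.tsum_le_tsum (fun x => ?_) (summable_mul_delta h.summable_up deltaPlus_mem t)
        h.summable_up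
      calc up x * deltaPlus x t ≤ |up x * deltaPlus x t| := le_abs_self _
        _ ≤ |up x| := by
            rw [abs_mul]
            calc |up x| * |deltaPlus x t| ≤ |up x| * 1 := by
                  apply mul_le_mul_of_nonneg_left _ (abs_nonneg _)
                  rw [abs_of_nonneg (deltaPlus_mem x t).1]; exact (deltaPlus_mem x t).2
              _ = |up x| := mul_one _
    linarith
  · exact ⟨0, fun t ht => absurd (ht.1.trans ht.2) (not_le.2 hab)⟩

/-- A useful function with `max R = R` attains its maximum on compact intervals. -/
lemma useful_exists_max {R f um up : ℝ → ℝ} (h : IsUseful R f um up) (hmax : MaxEqSelf R)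
    {a b : ℝ} (hab : a ≤ b) :
    ∃ w ∈ Set.Icc a b, ∀ v ∈ Set.Icc a b, R v ≤ R w := by
  by_contra hcon
  push_neg at hcon
  obtain ⟨C, hC⟩ := useful_bddAbove h a b
  set B := sSup (R '' Set.Icc a b) with hB
  have hneIm : (R '' Set.Icc a b).Nonempty := ⟨R a, a, ⟨le_refl a, hab⟩, rfl⟩
  have hbdd : BddAbove (R '' Set.Icc a b) := ⟨C, fun r ⟨w, hw, hwr⟩ => hwr ▸ hC w hw⟩
  have hub : ∀ v ∈ Set.Icc a b, R v ≤ B := fun v hv => le_csSup hbdd ⟨v, hv, rfl⟩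
  have hlt : ∀ w ∈ Set.Icc a b, R w < B := by
    intro w hw
    obtain ⟨v, hv, hwv⟩ := hcon w hw
    exact lt_of_lt_of_le hwv (hub v hv)
  -- each point has a neighborhood on which `R < (R w + B)/2`
  have key : ∀ w ∈ Set.Icc a b, ∀ᶠ v in 𝓝 w, R v < (R w + B) / 2 := by
    intro w hw
    have hwB : R w < B := hlt w hw
    have hmid : R w < (R w + B) / 2 := by linarith
    have hl : ∀ᶠ v in 𝓝[<] w, R v < (R w + B) / 2 :=
      ((useful_tendsto h w).1).eventually_lt_const (lt_of_le_of_lt (hmax w).1 hmid)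
    have hr : ∀ᶠ v in 𝓝[>] w, R v < (R w + B) / 2 :=
      ((useful_tendsto h w).2).eventually_lt_const (lt_of_le_of_lt (hmax w).2 hmid)
    have hge : ∀ᶠ v in 𝓝[≥] w, R v < (R w + B) / 2 := by
      have heq : 𝓝[≥] w = pure w ⊔ 𝓝[>] w := by
        rw [← Set.Ioi_insert, nhdsWithin_insert]
      rw [heq, eventually_sup, eventually_pure]
      exact ⟨hmid, hr⟩
    rw [← nhdsLT_sup_nhdsGE w, eventually_sup]
    exact ⟨hl, hge⟩
  obtain ⟨t, hsub⟩ := isCompact_Icc.elim_nhds_subcover'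
    (fun w hw => {v | R v < (R w + B) / 2}) (fun w hw => key w hw)
  have htne : t.Nonempty := by
    by_contra hte
    rw [Finset.not_nonempty_iff_eq_empty] at hte
    have := hsub (Set.left_mem_Icc.2 hab)
    simp [hte] at this
  set m := t.sup' htne (fun w => (R w.1 + B) / 2) with hm
  have hBm : B ≤ m := by
    refine csSup_le hneIm ?_
    rintro r ⟨v, hv, rfl⟩
    obtain ⟨i, hit⟩ := Set.mem_iUnion₂.1 (hsub hv)
    obtain ⟨hit1, hit2⟩ := hit
    refine le_trans (le_of_lt hit2) ?_
    rw [hm]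
    exact Finset.le_sup' (fun w : {x : ℝ // x ∈ Set.Icc a b} => (R w.1 + B) / 2) hit1
  have hmB : m < B := by
    rw [hm, Finset.sup'_lt_iff]
    intro w hwt
    have := hlt w.1 w.2
    linarith
  linarith

/-- If `L` is the limit of `R` along `F` and frequently `c ≤ R`, then `c ≤ L`. -/
lemma le_of_tendsto_of_frequently' {F : Filter ℝ} [F.NeBot] {R : ℝ → ℝ} {L c : ℝ}
    (hT : Tendsto R F (𝓝 L)) (hf : ∃ᶠ w in F, c ≤ R w) : c ≤ L := by
  by_contra hlt
  push_neg at hlt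
  have hev : ∀ᶠ w in F, R w < c := hT.eventually_lt_const hlt
  obtain ⟨w, hw1, hw2⟩ := (hf.and_eventually hev).exists
  exact absurd hw1 (not_le.2 hw2)

/-- Lemma 3.4:  `z ∈ (-∞, s)` lies in the interior of some island in `K = [-∞, s)`
iff there is `y ∈ (z, s)` with `R(z) < R(y)`. -/
theorem mem_island_iff (R f um up : ℝ → ℝ) (h : IsUseful R f um up)
    (hmax : MaxEqSelf R) (s Rinf : ℝ) (hRinf : ∀ z : ℝ, z < s → R z ≤ Rinf)
    (z : ℝ) (hz : z < s) :
    (∃ x y : EReal, IsIsland R Rinf s x y ∧ x < (z : EReal) ∧ (z : EReal) < y) ↔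
      ∃ y : ℝ, z < y ∧ y < s ∧ R z < R y := by
  constructor
  · rintro ⟨x, y, ⟨hxy, hisl⟩, hxz, hzy⟩
    rcases hisl with ⟨hys, hLx, hint⟩ | ⟨yr, hyyr, hyrs, hyx, hLy, hint, hout⟩
    · -- case (i): y = s
      have hzL : R z < Function.leftLim R s := hint z hxz hz
      have h1 : ∀ᶠ w in 𝓝[<] s, R z < R w :=
        ((useful_tendsto h s).1).eventually_const_lt hzL
      have h2 : ∀ᶠ w in 𝓝[<] s, z < w ∧ w < s := by
        filter_upwards [Ioo_mem_nhdsLT hz] with w hw using ⟨hw.1, hw.2⟩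
      obtain ⟨w, hw1, hw2, hw3⟩ := (h1.and h2).exists
      exact ⟨w, hw2, hw3, hw1⟩
    · -- case (ii)
      rw [hyyr] at hzy
      have hzyr : z < yr := by exact_mod_cast hzy
      exact ⟨yr, hzyr, hyrs, hint z hxz (hyyr ▸ hzy)⟩
  · rintro ⟨y0, hzy0, hy0s, hRzy0⟩
    set B := sSup (R '' Set.Ioo z s) with hB
    have hneIm : (R '' Set.Ioo z s).Nonempty := ⟨R y0, y0, ⟨hzy0, hy0s⟩, rfl⟩
    have hbdd : BddAbove (R '' Set.Ioo z s) := ⟨Rinf, fun r ⟨w, hw, hwr⟩ => hwr ▸ hRinf w hw.2⟩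
    have hub : ∀ w ∈ Set.Ioo z s, R w ≤ B := fun w hw => le_csSup hbdd ⟨w, hw, rfl⟩
    have hzB : R z < B := lt_of_lt_of_le hRzy0 (hub y0 ⟨hzy0, hy0s⟩)
    have hBinf : B ≤ Rinf := csSup_le hneIm (fun r ⟨w, hw, hwr⟩ => hwr ▸ hRinf w hw.2)
    have hLB : Function.leftLim R s ≤ B := by
      refine le_of_tendsto (useful_tendsto h s).1 ?_
      filter_upwards [Ioo_mem_nhdsLT hz] with w hw using hub w hw
    -- construct the left endpoint x
    obtain ⟨x, hxz, hxval, hxint⟩ :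
        ∃ x : EReal, x < (z : EReal) ∧ B ≤ Rval R Rinf x ∧
          ∀ w : ℝ, x < (w : EReal) → w ≤ z → R w < B := by
      set A := {w : ℝ | w ≤ z ∧ B ≤ R w} with hA
      by_cases hAne : A.Nonempty
      · have hAbdd : BddAbove A := ⟨z, fun w hw => hw.1⟩
        set x0 := sSup A with hx0
        have hx0z : x0 ≤ z := csSup_le hAne (fun w hw => hw.1)
        have hx0B : B ≤ R x0 := by
          by_cases hx0A : x0 ∈ A
          · exact hx0A.2
          · have hfreq : ∃ᶠ w in 𝓝[<] x0, B ≤ R w := by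
              rw [frequently_iff]
              intro U hU
              obtain ⟨t, ht, hsub⟩ := mem_nhdsLT_iff_exists_Ioo_subset.1 hU
              obtain ⟨w, hwA, htw⟩ := exists_lt_of_lt_csSup hAne ht
              have hwx0 : w < x0 :=
                lt_of_le_of_ne (le_csSup hAbdd hwA) (fun e => hx0A (e ▸ hwA))
              exact ⟨w, hsub ⟨htw, hwx0⟩, hwA.2⟩
            exact le_trans
              (le_of_tendsto_of_frequently' (useful_tendsto h x0).1 hfreq) (hmax x0).1
        have hx0zlt : x0 < z := by
          rcases lt_or_eq_of_le hx0z with hlt | heq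
          · exact hlt
          · exact absurd (heq ▸ hx0B) (not_le.2 hzB)
        refine ⟨(x0 : EReal), by exact_mod_cast hx0zlt, ?_, ?_⟩
        · simp only [Rval, EReal.coe_ne_bot, if_false, EReal.toReal_coe]
          exact hx0B
        · intro w hww hwz
          have hx0w : x0 < w := by exact_mod_cast hww
          by_contra hc
          push_neg at hc
          exact absurd (le_csSup hAbdd ⟨hwz, hc⟩) (not_le.2 hx0w)
      · refine ⟨⊥, EReal.bot_lt_coe z, ?_, ?_⟩
        · simp only [Rval, if_pos rfl]; exact hBinf
        · intro w _ hwz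
          by_contra hc
          push_neg at hc
          exact hAne ⟨w, hwz, hc⟩
    by_cases hatt : ∃ w ∈ Set.Ioo z s, B ≤ R w
    · -- case (ii): the supremum is attained; take the leftmost attaining point
      set C := {w : ℝ | w ∈ Set.Ioo z s ∧ B ≤ R w} with hC
      have hCne : C.Nonempty := by obtain ⟨w, hw1, hw2⟩ := hatt; exact ⟨w, hw1, hw2⟩
      have hCbdd : BddBelow C := ⟨z, fun w hw => le_of_lt hw.1.1⟩
      set Y := sInf C with hY
      have hzY' : z ≤ Y := le_csInf hCne (fun w hw => le_of_lt hw.1.1)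
      have hYs : Y < s := by
        obtain ⟨w, hw⟩ := hCne
        exact lt_of_le_of_lt (csInf_le hCbdd hw) hw.1.2
      have hYB : B ≤ R Y := by
        by_cases hYC : Y ∈ C
        · exact hYC.2
        · have hfreq : ∃ᶠ w in 𝓝[>] Y, B ≤ R w := by
            rw [frequently_iff]
            intro U hU
            obtain ⟨t, ht, hsub⟩ := mem_nhdsGT_iff_exists_Ioo_subset.1 hU
            obtain ⟨w, hwC, hwt⟩ := exists_lt_of_csInf_lt hCne ht
            have hYw : Y < w :=
              lt_of_le_of_ne (csInf_le hCbdd hwC) (fun e => hYC (e ▸ hwC))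
            exact ⟨w, hsub ⟨hYw, hwt⟩, hwC.2⟩
          exact le_trans
            (le_of_tendsto_of_frequently' (useful_tendsto h Y).2 hfreq) (hmax Y).2
      have hzY : z < Y := by
        rcases lt_or_eq_of_le hzY' with hlt | heq
        · exact hlt
        · exact absurd (heq ▸ hYB) (not_le.2 hzB)
      have hYB' : R Y ≤ B := hub Y ⟨hzY, hYs⟩
      refine ⟨x, (Y : EReal), ⟨?_, Or.inr ⟨Y, rfl, hYs, ?_, ?_, ?_, ?_⟩⟩, hxz, ?_⟩
      · exact lt_trans hxz (by exact_mod_cast hzY)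
      · exact le_trans hYB' hxval
      · exact le_trans hLB hYB
      · intro w hxw hwY
        have hwY' : w < Y := by exact_mod_cast hwY
        have hwB : R w < B := by
          rcases le_or_gt w z with hwz | hwz
          · exact hxint w hxw hwz
          · have hwIoo : w ∈ Set.Ioo z s := ⟨hwz, lt_trans hwY' hYs⟩
            rcases lt_or_eq_of_le (hub w hwIoo) with hlt | heq
            · exact hlt
            · exact absurd (csInf_le hCbdd ⟨hwIoo, le_of_eq heq.symm⟩) (not_le.2 hwY')
        exact lt_of_lt_of_le hwB hYB
      · intro w hYw hws
        exact le_trans (hub w ⟨lt_trans hzY hYw, hws⟩) hYB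
      · exact_mod_cast hzY
    · -- case (i): the supremum is not attained; B = leftLim R s
      push_neg at hatt
      have hBL : B ≤ Function.leftLim R s := by
        by_contra hc
        push_neg at hc
        set L := Function.leftLim R s with hL
        have hmid : L < (L + B) / 2 := by linarith
        have hev : ∀ᶠ w in 𝓝[<] s, R w < (L + B) / 2 :=
          ((useful_tendsto h s).1).eventually_lt_const hmid
        obtain ⟨t, ht, hsub⟩ := mem_nhdsLT_iff_exists_Ioo_subset.1
          (hev.and (Ioo_mem_nhdsLT hz))
        -- max of R on [z, max t z]
        set t' := max t z with ht'
        have ht's : t' < s := max_lt (by exact ht) hz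
        obtain ⟨w0, hw0mem, hw0max⟩ := useful_exists_max h hmax (le_max_right t z)
        have hw0B : R w0 < B := by
          rcases lt_or_eq_of_le hw0mem.1 with hlt | heq
          · exact hatt w0 ⟨hlt, lt_of_le_of_lt hw0mem.2 ht's⟩
          · exact heq ▸ hzB
        have hm : ∀ w ∈ Set.Ioo z s, R w ≤ max ((L + B) / 2) (R w0) := by
          intro w hw
          rcases le_or_gt w t' with hwt | hwt
          · exact le_trans (hw0max w ⟨le_of_lt hw.1, hwt⟩) (le_max_right _ _)
          · have : w ∈ Set.Ioo t s := ⟨lt_of_le_of_lt (le_max_left t z) hwt, hw.2⟩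
            exact le_trans (le_of_lt (hsub this).1) (le_max_left _ _)
        have hBle : B ≤ max ((L + B) / 2) (R w0) :=
          csSup_le hneIm (fun r ⟨w, hw, hwr⟩ => hwr ▸ hm w hw)
        rcases le_max_iff.1 hBle with h1 | h1
        · linarith
        · linarith
      refine ⟨x, (s : EReal), ⟨?_, Or.inl ⟨rfl, ?_, ?_⟩⟩, hxz, by exact_mod_cast hz⟩
      · exact lt_trans hxz (by exact_mod_cast hz)
      · exact le_trans hLB hxval
      · intro w hxw hws
        rcases le_or_gt w z with hwz | hwz
        · exact lt_of_lt_of_le (hxint w hxw hwz) hBL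
        · exact lt_of_lt_of_le (hatt w ⟨hwz, hws⟩) hBL

end
end

section
/- The function H is nonincreasing on [−∞,s), i.e., H(x) ≥ H(y) whenever x < y < s. Moreover H(z) = lim_{y→z⁻}H(y) for every z ∈ (−∞,s), and lim_{y→s⁻}H(y) = R₋(s). -/
/-!
Islands (Section 3.3 of the paper).  `R` is a useful function with `max R(x) = R(x)` for all
`x`, `s ∈ ℝ`, and `R(-∞) = Rinf` is a fixed value with `R(z) ≤ Rinf` for all `z < s`.
A (red) island in `K = [-∞, s)` is an open interval `(x, y) ⊆ K` (with `x = -∞` allowed,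
encoded by `⊥ : EReal`) as in the definition below.  Lemma 3.4 of the paper:  `z ∈ (-∞, s)`
lies in the interior of an island iff `R(z) < R(y)` for some `y ∈ (z, s)`.
-/

noncomputable section

open Filter Topology

/-- The function `H : [-∞, s) → ℝ` flattening the islands of `R`:
`H(z) = R(y)` if `z ∈ (x, y]` for an island `(x, y)` with `y < s`; `H(z) = R₋(s)` if
`z ∈ (x, s)` for an island `(x, s)`; and `H(z) = R(z)` otherwise. -/
noncomputable def Hfun (R : ℝ → ℝ) (Rinf s : ℝ) (z : EReal) : ℝ := by
  classical
  exact
    if h : ∃ x y : EReal, IsIsland R Rinf s x y ∧ x < z ∧ z ≤ y ∧ y < (s : EReal) then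
      R (h.choose_spec.choose).toReal
    else if ∃ x : EReal, IsIsland R Rinf s x (s : EReal) ∧ x < z ∧ z < (s : EReal) then
      Function.leftLim R s
    else Rval R Rinf z



section IslandsAux

lemma tendsto_deltaMinus_left (x a : ℝ) :
    Tendsto (deltaMinus x) (𝓝[<] a) (𝓝 (Set.indicator (Set.Iio a) 1 x)) := by
  by_cases h : x < a
  · rw [Set.indicator_of_mem (Set.mem_Iio.mpr h)]
    refine Tendsto.congr' ?_ tendsto_const_nhds
    filter_upwards [Ioo_mem_nhdsLT h] with t ht
    simp only [deltaMinus, Set.indicator_apply, Set.mem_Ici]; rw [if_pos (by linarith [ht.1])]; simp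
  · rw [Set.indicator_of_notMem (by simp only [Set.mem_Iio]; exact h)]
    refine Tendsto.congr' ?_ tendsto_const_nhds
    filter_upwards [self_mem_nhdsWithin] with t (ht : t < a)
    simp only [deltaMinus, Set.indicator_apply, Set.mem_Ici]; rw [if_neg (by push_neg; linarith [not_lt.mp h])]

lemma tendsto_deltaPlus_left (x a : ℝ) :
    Tendsto (deltaPlus x) (𝓝[<] a) (𝓝 (Set.indicator (Set.Iio a) 1 x)) := by
  by_cases h : x < a
  · rw [Set.indicator_of_mem (Set.mem_Iio.mpr h)]
    refine Tendsto.congr' ?_ tendsto_const_nhds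
    filter_upwards [Ioo_mem_nhdsLT h] with t ht
    simp only [deltaPlus, Set.indicator_apply, Set.mem_Ioi]; rw [if_pos ht.1]; simp
  · rw [Set.indicator_of_notMem (by simp only [Set.mem_Iio]; exact h)]
    refine Tendsto.congr' ?_ tendsto_const_nhds
    filter_upwards [self_mem_nhdsWithin] with t (ht : t < a)
    simp only [deltaPlus, Set.indicator_apply, Set.mem_Ioi]; rw [if_neg (by push_neg; linarith [not_lt.mp h])]

lemma tendsto_deltaMinus_right (x a : ℝ) :
    Tendsto (deltaMinus x) (𝓝[>] a) (𝓝 (Set.indicator (Set.Iic a) 1 x)) := by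
  by_cases h : x ≤ a
  · rw [Set.indicator_of_mem (Set.mem_Iic.mpr h)]
    refine Tendsto.congr' ?_ tendsto_const_nhds
    filter_upwards [self_mem_nhdsWithin] with t (ht : a < t)
    simp only [deltaMinus, Set.indicator_apply, Set.mem_Ici]; rw [if_pos (by linarith)]; simp
  · rw [Set.indicator_of_notMem (by simp only [Set.mem_Iic]; exact h)]
    refine Tendsto.congr' ?_ tendsto_const_nhds
    filter_upwards [Ioo_mem_nhdsGT (not_le.mp h)] with t ht
    simp only [deltaMinus, Set.indicator_apply, Set.mem_Ici]; rw [if_neg (by push_neg; linarith [ht.2])]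

lemma tendsto_deltaPlus_right (x a : ℝ) :
    Tendsto (deltaPlus x) (𝓝[>] a) (𝓝 (Set.indicator (Set.Iic a) 1 x)) := by
  by_cases h : x ≤ a
  · rw [Set.indicator_of_mem (Set.mem_Iic.mpr h)]
    refine Tendsto.congr' ?_ tendsto_const_nhds
    filter_upwards [self_mem_nhdsWithin] with t (ht : a < t)
    simp only [deltaPlus, Set.indicator_apply, Set.mem_Ioi]; rw [if_pos (by linarith)]; simp
  · rw [Set.indicator_of_notMem (by simp only [Set.mem_Iic]; exact h)]
    refine Tendsto.congr' ?_ tendsto_const_nhds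
    filter_upwards [Ioo_mem_nhdsGT (not_le.mp h)] with t ht
    simp only [deltaPlus, Set.indicator_apply, Set.mem_Ioi]; rw [if_neg (by push_neg; linarith [ht.2])]

lemma IsUseful.tendsto_left {R f um up : ℝ → ℝ} (h : IsUseful R f um up) (a : ℝ) :
    ∃ l, Tendsto R (𝓝[<] a) (𝓝 l) := by
  have hd : ∀ (u : ℝ → ℝ), Summable (fun x => |u x|) →
      (∀ x t, ‖u x * Set.indicator (Set.Ici x) 1 t‖ ≤ |u x|) → True := fun _ _ _ => trivial
  refine ⟨f a + (∑' x : ℝ, um x * Set.indicator (Set.Iio a) 1 x)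
      + (∑' x : ℝ, up x * Set.indicator (Set.Iio a) 1 x), ?_⟩
  have h1 : Tendsto (fun t => ∑' x : ℝ, um x * deltaMinus x t) (𝓝[<] a)
      (𝓝 (∑' x : ℝ, um x * Set.indicator (Set.Iio a) 1 x)) := by
    refine tendsto_tsum_of_dominated_convergence h.summable_um
      (fun x => (tendsto_const_nhds.mul (tendsto_deltaMinus_left x a))) ?_
    filter_upwards with t x
    have hb : |deltaMinus x t| ≤ 1 := by
      unfold deltaMinus Set.indicator; split <;> simp
    rw [Real.norm_eq_abs, abs_mul]
    calc |um x| * |deltaMinus x t| ≤ |um x| * 1 := by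
          exact mul_le_mul_of_nonneg_left hb (abs_nonneg _)
      _ = |um x| := mul_one _
  have h2 : Tendsto (fun t => ∑' x : ℝ, up x * deltaPlus x t) (𝓝[<] a)
      (𝓝 (∑' x : ℝ, up x * Set.indicator (Set.Iio a) 1 x)) := by
    refine tendsto_tsum_of_dominated_convergence h.summable_up
      (fun x => (tendsto_const_nhds.mul (tendsto_deltaPlus_left x a))) ?_
    filter_upwards with t x
    have hb : |deltaPlus x t| ≤ 1 := by
      unfold deltaPlus Set.indicator; split <;> simp
    rw [Real.norm_eq_abs, abs_mul]
    calc |up x| * |deltaPlus x t| ≤ |up x| * 1 := by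
          exact mul_le_mul_of_nonneg_left hb (abs_nonneg _)
      _ = |up x| := mul_one _
  have hf : Tendsto f (𝓝[<] a) (𝓝 (f a)) :=
    (h.cont.tendsto a).mono_left nhdsWithin_le_nhds
  exact Tendsto.congr (fun t => (h.decomp t).symm) ((hf.add h1).add h2)

lemma IsUseful.tendsto_right {R f um up : ℝ → ℝ} (h : IsUseful R f um up) (a : ℝ) :
    ∃ l, Tendsto R (𝓝[>] a) (𝓝 l) := by
  refine ⟨f a + (∑' x : ℝ, um x * Set.indicator (Set.Iic a) 1 x)
      + (∑' x : ℝ, up x * Set.indicator (Set.Iic a) 1 x), ?_⟩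
  have h1 : Tendsto (fun t => ∑' x : ℝ, um x * deltaMinus x t) (𝓝[>] a)
      (𝓝 (∑' x : ℝ, um x * Set.indicator (Set.Iic a) 1 x)) := by
    refine tendsto_tsum_of_dominated_convergence h.summable_um
      (fun x => (tendsto_const_nhds.mul (tendsto_deltaMinus_right x a))) ?_
    filter_upwards with t x
    have hb : |deltaMinus x t| ≤ 1 := by
      unfold deltaMinus Set.indicator; split <;> simp
    rw [Real.norm_eq_abs, abs_mul]
    calc |um x| * |deltaMinus x t| ≤ |um x| * 1 := by
          exact mul_le_mul_of_nonneg_left hb (abs_nonneg _)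
      _ = |um x| := mul_one _
  have h2 : Tendsto (fun t => ∑' x : ℝ, up x * deltaPlus x t) (𝓝[>] a)
      (𝓝 (∑' x : ℝ, up x * Set.indicator (Set.Iic a) 1 x)) := by
    refine tendsto_tsum_of_dominated_convergence h.summable_up
      (fun x => (tendsto_const_nhds.mul (tendsto_deltaPlus_right x a))) ?_
    filter_upwards with t x
    have hb : |deltaPlus x t| ≤ 1 := by
      unfold deltaPlus Set.indicator; split <;> simp
    rw [Real.norm_eq_abs, abs_mul]
    calc |up x| * |deltaPlus x t| ≤ |up x| * 1 := by
          exact mul_le_mul_of_nonneg_left hb (abs_nonneg _)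
      _ = |up x| := mul_one _
  have hf : Tendsto f (𝓝[>] a) (𝓝 (f a)) :=
    (h.cont.tendsto a).mono_left nhdsWithin_le_nhds
  exact Tendsto.congr (fun t => (h.decomp t).symm) ((hf.add h1).add h2)

lemma IsUseful.tendsto_leftLim {R f um up : ℝ → ℝ} (h : IsUseful R f um up) (a : ℝ) :
    Tendsto R (𝓝[<] a) (𝓝 (Function.leftLim R a)) := by
  obtain ⟨l, hl⟩ := h.tendsto_left a
  rwa [leftLim_eq_of_tendsto hl]

lemma IsUseful.tendsto_rightLim {R f um up : ℝ → ℝ} (h : IsUseful R f um up) (a : ℝ) :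
    Tendsto R (𝓝[>] a) (𝓝 (Function.rightLim R a)) := by
  obtain ⟨l, hl⟩ := h.tendsto_right a
  rwa [rightLim_eq_of_tendsto hl]

lemma R_sSup_ge (R : ℝ → ℝ)
    (htl : ∀ a : ℝ, Filter.Tendsto R (nhdsWithin a (Set.Iio a)) (nhds (Function.leftLim R a)))
    (htr : ∀ a : ℝ, Filter.Tendsto R (nhdsWithin a (Set.Ioi a)) (nhds (Function.rightLim R a)))
    (hmx : MaxEqSelf R)
    {B : Set ℝ} {c : ℝ} (hB : B.Nonempty) (hBdd : BddAbove B)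
    (hc : ∀ t ∈ B, c ≤ R t) : c ≤ R (sSup B) := by
  by_cases hb : sSup B ∈ B
  · exact hc _ hb
  · have hsub : B ⊆ Set.Iio (sSup B) := fun t ht =>
      lt_of_le_of_ne (le_csSup hBdd ht) (by rintro rfl; exact hb ht)
    have hne : (𝓝[B] (sSup B)).NeBot :=
      mem_closure_iff_nhdsWithin_neBot.mp (csSup_mem_closure hB hBdd)
    have ht : Tendsto R (𝓝[B] (sSup B)) (𝓝 (Function.leftLim R (sSup B))) :=
      (htl (sSup B)).mono_left (nhdsWithin_mono _ hsub)
    have : c ≤ Function.leftLim R (sSup B) :=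
      ge_of_tendsto ht (eventually_mem_nhdsWithin.mono hc)
    exact this.trans (hmx (sSup B)).1

lemma usc (R : ℝ → ℝ)
    (htl : ∀ a : ℝ, Filter.Tendsto R (nhdsWithin a (Set.Iio a)) (nhds (Function.leftLim R a)))
    (htr : ∀ a : ℝ, Filter.Tendsto R (nhdsWithin a (Set.Ioi a)) (nhds (Function.rightLim R a)))
    (hmx : MaxEqSelf R)
    {c y : ℝ} (hy : R c < y) : ∀ᶠ u in 𝓝 c, R u < y := by
  have h1 : ∀ᶠ u in 𝓝[<] c, R u < y :=
    (htl c).eventually_lt_const (lt_of_le_of_lt (hmx c).1 hy)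
  have h2 : ∀ᶠ u in 𝓝[>] c, R u < y :=
    (htr c).eventually_lt_const (lt_of_le_of_lt (hmx c).2 hy)
  have h3 : ∀ᶠ u in 𝓝[≥] c, R u < y := by
    rw [← Set.Ioi_insert, nhdsWithin_insert, eventually_sup]
    exact ⟨by simpa using hy, h2⟩
  rw [← nhdsLT_sup_nhdsGE c, eventually_sup]
  exact ⟨h1, h3⟩

lemma exists_max_Icc (R : ℝ → ℝ)
    (htl : ∀ a : ℝ, Filter.Tendsto R (nhdsWithin a (Set.Iio a)) (nhds (Function.leftLim R a)))
    (htr : ∀ a : ℝ, Filter.Tendsto R (nhdsWithin a (Set.Ioi a)) (nhds (Function.rightLim R a)))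
    (hmx : MaxEqSelf R)
    {a b : ℝ} (hab : a ≤ b) :
    ∃ y ∈ Set.Icc a b, ∀ u ∈ Set.Icc a b, R u ≤ R y := by
  by_contra hcon
  push_neg at hcon
  have hc : ∀ t : ℝ, t ∈ Set.Icc a b → ∃ u, u ∈ Set.Icc a b ∧ R t < R u := by
    intro t ht
    obtain ⟨u, hu1, hu2⟩ := hcon t ht
    exact ⟨u, hu1, hu2⟩
  choose g hg1 hg2 using hc
  classical
  let G : ℝ → ℝ := fun t => if ht : t ∈ Set.Icc a b then g t ht else 0
  have hU : ∀ t ∈ Set.Icc a b, {v | R v < R (G t)} ∈ 𝓝 t := by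
    intro t ht
    have : R t < R (G t) := by simp only [G, dif_pos ht]; exact hg2 t ht
    exact usc R htl htr hmx this
  obtain ⟨fs, hfs1, hfs2⟩ := (isCompact_Icc (a := a) (b := b)).elim_nhds_subcover
    (fun t => {v | R v < R (G t)}) hU
  have hane : fs.Nonempty := by
    rcases Set.mem_iUnion₂.mp (hfs2 ⟨le_refl a, hab⟩) with ⟨x, hx, -⟩
    exact ⟨x, hx⟩
  obtain ⟨x0, hx0, hmaxx⟩ := fs.exists_max_image (fun t => R (G t)) hane
  have hGx0 : G x0 ∈ Set.Icc a b := by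
    have := hfs1 x0 hx0
    simp only [G, dif_pos this]
    exact hg1 x0 this
  rcases Set.mem_iUnion₂.mp (hfs2 hGx0) with ⟨x, hx, hvx⟩
  exact absurd (lt_of_lt_of_le hvx (hmaxx x hx)) (lt_irrefl _)

lemma bddAbove_image (R : ℝ → ℝ) {s Rinf : ℝ}
    (htl : ∀ a : ℝ, Filter.Tendsto R (nhdsWithin a (Set.Iio a)) (nhds (Function.leftLim R a)))
    (htr : ∀ a : ℝ, Filter.Tendsto R (nhdsWithin a (Set.Ioi a)) (nhds (Function.rightLim R a)))
    (hmx : MaxEqSelf R) (hRi : ∀ z : ℝ, z < s → R z ≤ Rinf)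
    {A : Set ℝ} (hA : A ⊆ Set.Iio s) : BddAbove (R '' A) := by
  refine ⟨Rinf, ?_⟩
  rintro v ⟨u, hu, rfl⟩
  exact hRi u (hA hu)

lemma L_le_sSup (R : ℝ → ℝ) {s Rinf : ℝ}
    (htl : ∀ a : ℝ, Filter.Tendsto R (nhdsWithin a (Set.Iio a)) (nhds (Function.leftLim R a)))
    (htr : ∀ a : ℝ, Filter.Tendsto R (nhdsWithin a (Set.Ioi a)) (nhds (Function.rightLim R a)))
    (hmx : MaxEqSelf R) (hRi : ∀ z : ℝ, z < s → R z ≤ Rinf)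
    {z : ℝ} (hz : z < s) :
    Function.leftLim R s ≤ sSup (R '' Set.Ioo z s) := by
  refine le_of_tendsto (htl s) ?_
  filter_upwards [Ioo_mem_nhdsLT hz] with u hu
  exact le_csSup (bddAbove_image R htl htr hmx hRi (fun v hv => hv.2)) (Set.mem_image_of_mem R hu)

lemma dichotomy (R : ℝ → ℝ) {s Rinf : ℝ}
    (htl : ∀ a : ℝ, Filter.Tendsto R (nhdsWithin a (Set.Iio a)) (nhds (Function.leftLim R a)))
    (htr : ∀ a : ℝ, Filter.Tendsto R (nhdsWithin a (Set.Ioi a)) (nhds (Function.rightLim R a)))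
    (hmx : MaxEqSelf R) (hRi : ∀ z : ℝ, z < s → R z ≤ Rinf)
    {z : ℝ} (hz : z < s) (hT : R z < sSup (R '' Set.Ioo z s)) :
    (∃ y ∈ Set.Ioo z s, R y = sSup (R '' Set.Ioo z s) ∧ ∀ u ∈ Set.Ioo z y, R u < R y) ∨
    (∀ u ∈ Set.Ioo z s, R u < Function.leftLim R s) := by
  set T := sSup (R '' Set.Ioo z s) with hTdef
  have hbdd : BddAbove (R '' Set.Ioo z s) := bddAbove_image R htl htr hmx hRi (fun v hv => hv.2)
  have hle : ∀ u ∈ Set.Ioo z s, R u ≤ T := fun u hu =>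
    le_csSup hbdd (Set.mem_image_of_mem R hu)
  by_cases hatt : ∃ t ∈ Set.Ioo z s, R t = T
  · left
    set E := {t | t ∈ Set.Ioo z s ∧ R t = T} with hEdef
    obtain ⟨t₀, ht₀, hRt₀⟩ := hatt
    have hne : E.Nonempty := ⟨t₀, ht₀, hRt₀⟩
    have hbb : BddBelow E := ⟨z, fun e he => he.1.1.le⟩
    set y := sInf E with hydef
    have hyz : z ≤ y := le_csInf hne fun e he => he.1.1.le
    have hys : y < s := lt_of_le_of_lt (csInf_le hbb ⟨ht₀, hRt₀⟩) ht₀.2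
    by_cases hyE : y ∈ E
    · refine ⟨y, hyE.1, hyE.2, fun u hu => ?_⟩
      rw [hyE.2]
      refine lt_of_le_of_ne (hle u ⟨hu.1, hu.2.trans hys⟩) fun hEq => ?_
      exact absurd (csInf_le hbb (⟨⟨hu.1, hu.2.trans hys⟩, hEq⟩ : u ∈ E)) (not_le.mpr hu.2)
    · exfalso
      have hcl : y ∈ closure E := csInf_mem_closure hne hbb
      have hneb : (𝓝[E] y).NeBot := mem_closure_iff_nhdsWithin_neBot.mp hcl
      have hsub : E ⊆ Set.Ioi y := fun e he =>
        lt_of_le_of_ne (csInf_le hbb he) (by rintro rfl; exact hyE he)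
      have ht1 : Tendsto R (𝓝[E] y) (𝓝 (Function.rightLim R y)) :=
        (htr y).mono_left (nhdsWithin_mono _ hsub)
      have ht2 : Tendsto R (𝓝[E] y) (𝓝 T) := by
        refine Tendsto.congr' ?_ tendsto_const_nhds
        filter_upwards [eventually_mem_nhdsWithin] with e he
        exact he.2.symm
      have hrl : Function.rightLim R y = T := tendsto_nhds_unique ht1 ht2
      have hyT : T ≤ R y := hrl ▸ (hmx y).2
      have hzy : z < y := by
        rcases eq_or_lt_of_le hyz with h | h
        · exact absurd (h ▸ hyT) (not_le.mpr hT)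
        · exact h
      have : R y = T := le_antisymm (hle y ⟨hzy, hys⟩) hyT
      exact hyE ⟨⟨hzy, hys⟩, this⟩
  · right
    have hlt : ∀ u ∈ Set.Ioo z s, R u < T := fun u hu =>
      lt_of_le_of_ne (hle u hu) fun h => hatt ⟨u, hu, h⟩
    suffices hTL : T ≤ Function.leftLim R s by
      exact fun u hu => lt_of_lt_of_le (hlt u hu) hTL
    by_contra hc
    push_neg at hc
    set L := Function.leftLim R s with hLdef
    have hrz : Function.rightLim R z ≤ R z := (hmx z).2
    set q := max (max ((L + T)/2) ((R z + T)/2)) ((Function.rightLim R z + T)/2) with hq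
    have hqT : q < T := by
      apply max_lt (max_lt _ _) _ <;> linarith
    have hLq : L < q := by
      have : L < (L + T)/2 := by linarith
      exact this.trans_le (le_max_of_le_left (le_max_left _ _))
    have hrzq : Function.rightLim R z < q := by
      have h1 : Function.rightLim R z < (Function.rightLim R z + T)/2 := by linarith
      exact h1.trans_le (le_max_right _ _)
    -- tail near s where R < q
    obtain ⟨t₀', ht₀'s, ht₀'⟩ := (mem_nhdsLT_iff_exists_Ioo_subset' (show s - 1 < s by linarith)).mp
      ((htl s).eventually_lt_const hLq)
    -- head near z where R < q
    obtain ⟨t₁', ht₁'z, ht₁'⟩ := (mem_nhdsGT_iff_exists_Ioo_subset' (show z < z + 1 by linarith)).mp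
      ((htr z).eventually_lt_const hrzq)
    have ht₀'lt : t₀' < s := ht₀'s
    have ht₁'gt : z < t₁' := ht₁'z
    set c := (z + min t₁' s)/2 with hcdef
    set d := (max t₀' z + s)/2 with hddef
    have hzm : z < min t₁' s := lt_min ht₁'gt hz
    have hzc : z < c := by have := min_le_left t₁' s; have := min_le_right t₁' s; simp [hcdef]; linarith
    have hct : c < t₁' := by have := min_le_left t₁' s; simp [hcdef]; linarith
    have hcs : c < s := by have := min_le_right t₁' s; simp [hcdef]; linarith
    have hMs : max t₀' z < s := max_lt ht₀'lt hz
    have hMd : max t₀' z < d := by rw [hddef]; linarith [hMs]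
    have hds : d < s := by rw [hddef]; linarith [hMs]
    have hzd : z < d := lt_of_le_of_lt (le_max_right t₀' z) hMd
    have ht₀d : t₀' < d := lt_of_le_of_lt (le_max_left t₀' z) hMd
    have hcover : ∀ v ∈ Set.Ioo z s, v < c ∨ d < v → R v < q := by
      rintro v hv (h | h)
      · exact ht₁' ⟨hv.1, h.trans hct⟩
      · exact ht₀' ⟨ht₀d.trans h, hv.2⟩
    by_cases hcd : c ≤ d
    · obtain ⟨y, hy, hymax⟩ := exists_max_Icc R htl htr hmx hcd
      have hyIoo : y ∈ Set.Ioo z s := ⟨hzc.trans_le hy.1, lt_of_le_of_lt hy.2 hds⟩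
      have hTle : T ≤ max q (R y) := by
        refine csSup_le ((Set.nonempty_Ioo.mpr hz).image R) ?_
        rintro v ⟨u, hu, rfl⟩
        rcases lt_or_ge u c with h | h1
        · exact le_max_of_le_left (hcover u hu (Or.inl h)).le
        rcases le_or_gt u d with h2 | h2
        · exact le_max_of_le_right (hymax u ⟨h1, h2⟩)
        · exact le_max_of_le_left (hcover u hu (Or.inr h2)).le
      rcases max_cases q (R y) with ⟨hm, -⟩ | ⟨hm, -⟩ <;> rw [hm] at hTle
      · exact absurd hTle (not_le.mpr hqT)
      · exact absurd hTle (not_le.mpr (hlt y hyIoo))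
    · have hTle : T ≤ q := by
        refine csSup_le ((Set.nonempty_Ioo.mpr hz).image R) ?_
        rintro v ⟨u, hu, rfl⟩
        rcases lt_or_ge u c with h | h1
        · exact (hcover u hu (Or.inl h)).le
        · exact (hcover u hu (Or.inr (lt_of_lt_of_le (not_le.mp hcd) h1))).le
      exact absurd hTle (not_le.mpr hqT)

lemma L_le_Rinf (R : ℝ → ℝ) {s Rinf : ℝ}
    (htl : ∀ a : ℝ, Filter.Tendsto R (nhdsWithin a (Set.Iio a)) (nhds (Function.leftLim R a)))
    (htr : ∀ a : ℝ, Filter.Tendsto R (nhdsWithin a (Set.Ioi a)) (nhds (Function.rightLim R a)))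
    (hmx : MaxEqSelf R) (hRi : ∀ z : ℝ, z < s → R z ≤ Rinf) :
    Function.leftLim R s ≤ Rinf := by
  refine le_of_tendsto (htl s) ?_
  filter_upwards [self_mem_nhdsWithin] with u hu
  exact hRi u hu

lemma island_exists (R : ℝ → ℝ) {s Rinf : ℝ}
    (htl : ∀ a : ℝ, Filter.Tendsto R (nhdsWithin a (Set.Iio a)) (nhds (Function.leftLim R a)))
    (htr : ∀ a : ℝ, Filter.Tendsto R (nhdsWithin a (Set.Ioi a)) (nhds (Function.rightLim R a)))
    (hmx : MaxEqSelf R) (hRi : ∀ z : ℝ, z < s → R z ≤ Rinf)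
    {z : ℝ} (hz : z < s)
    (hcond : R z < Function.leftLim R s ∨ ∃ u ∈ Set.Ioo z s, R z < R u) :
    (∃ x y : EReal, IsIsland R Rinf s x y ∧ x < (z : EReal) ∧ (z : EReal) ≤ y ∧
      y < (s : EReal)) ∨
    (∃ x : EReal, IsIsland R Rinf s x (s : EReal) ∧ x < (z : EReal) ∧
      (z : EReal) < (s : EReal)) := by
  set T := sSup (R '' Set.Ioo z s) with hTdef
  have hbdd : BddAbove (R '' Set.Ioo z s) := bddAbove_image R htl htr hmx hRi (fun v hv => hv.2)
  have hle : ∀ u ∈ Set.Ioo z s, R u ≤ T := fun u hu =>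
    le_csSup hbdd (Set.mem_image_of_mem R hu)
  have hT : R z < T := by
    rcases hcond with h | ⟨u, hu, h⟩
    · exact lt_of_lt_of_le h (L_le_sSup R htl htr hmx hRi hz)
    · exact lt_of_lt_of_le h (hle u hu)
  rcases dichotomy R htl htr hmx hRi hz hT with ⟨y, hy, hRy, hmin⟩ | hflat
  · left
    set B := {t : ℝ | t < y ∧ R y ≤ R t} with hBdef
    have hBz : B ⊆ Set.Iio z := by
      intro t ht
      by_contra hc
      rw [Set.mem_Iio, not_lt] at hc
      rcases eq_or_lt_of_le hc with h | h
      · subst h; linarith [ht.2, hRy, hTdef, hT]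
      · exact absurd ht.2 (not_le.mpr (hmin t ⟨h, ht.1⟩))
    by_cases hBne : B.Nonempty
    · have hBdd2 : BddAbove B := ⟨z, fun t ht => (hBz ht).le⟩
      have hRb : R y ≤ R (sSup B) := R_sSup_ge R htl htr hmx hBne hBdd2 (fun t ht => ht.2)
      have hbz : sSup B < z := by
        refine lt_of_le_of_ne (csSup_le hBne fun t ht => (hBz ht).le) fun h => ?_
        rw [h] at hRb; linarith [hRb, hRy, hTdef, hT]
      refine ⟨((sSup B : ℝ) : EReal), ((y : ℝ) : EReal),
        ⟨?_, Or.inr ⟨y, rfl, hy.2, ?_, ?_, ?_, ?_⟩⟩, ?_, ?_, ?_⟩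
      · exact_mod_cast hbz.trans hy.1
      · simpa [Rval] using hRb
      · rw [hRy]; exact L_le_sSup R htl htr hmx hRi hz
      · intro v h1 h2
        have h1' : sSup B < v := by exact_mod_cast h1
        have h2' : v < y := by exact_mod_cast h2
        have hvB : v ∉ B := fun hvB => absurd (le_csSup hBdd2 hvB) (not_le.mpr h1')
        by_contra hcc
        push_neg at hcc
        exact hvB ⟨h2', hcc⟩
      · intro w hw1 hw2
        rw [hRy]; exact hle w ⟨hy.1.trans hw1, hw2⟩
      · exact_mod_cast hbz
      · exact_mod_cast hy.1.le
      · exact_mod_cast hy.2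
    · refine ⟨(⊥ : EReal), ((y : ℝ) : EReal),
        ⟨bot_lt_iff_ne_bot.mpr (by simp), Or.inr ⟨y, rfl, hy.2, ?_, ?_, ?_, ?_⟩⟩, ?_, ?_, ?_⟩
      · simpa [Rval] using hRi y hy.2
      · rw [hRy]; exact L_le_sSup R htl htr hmx hRi hz
      · intro v h1 h2
        have h2' : v < y := by exact_mod_cast h2
        by_contra hcc
        push_neg at hcc
        exact hBne ⟨v, h2', hcc⟩
      · intro w hw1 hw2
        rw [hRy]; exact hle w ⟨hy.1.trans hw1, hw2⟩
      · exact bot_lt_iff_ne_bot.mpr (by simp)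
      · exact_mod_cast hy.1.le
      · exact_mod_cast hy.2
  · right
    have hRzL : R z < Function.leftLim R s := by
      rcases hcond with h | ⟨u, hu, h⟩
      · exact h
      · exact h.trans (hflat u hu)
    set B := {t : ℝ | t < s ∧ Function.leftLim R s ≤ R t} with hBdef
    have hBz : B ⊆ Set.Iio z := by
      intro t ht
      by_contra hc
      rw [Set.mem_Iio, not_lt] at hc
      rcases eq_or_lt_of_le hc with h | h
      · subst h; linarith [ht.2]
      · exact absurd ht.2 (not_le.mpr (hflat t ⟨h, ht.1⟩))
    by_cases hBne : B.Nonempty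
    · have hBdd2 : BddAbove B := ⟨z, fun t ht => (hBz ht).le⟩
      have hRb : Function.leftLim R s ≤ R (sSup B) := R_sSup_ge R htl htr hmx hBne hBdd2 (fun t ht => ht.2)
      have hbz : sSup B < z := by
        refine lt_of_le_of_ne (csSup_le hBne fun t ht => (hBz ht).le) fun h => ?_
        rw [h] at hRb; linarith
      refine ⟨((sSup B : ℝ) : EReal), ⟨?_, Or.inl ⟨rfl, ?_, ?_⟩⟩, ?_, ?_⟩
      · exact_mod_cast hbz.trans hz
      · simpa [Rval] using hRb
      · intro v h1 h2
        have h1' : sSup B < v := by exact_mod_cast h1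
        have hvB : v ∉ B := fun hvB => absurd (le_csSup hBdd2 hvB) (not_le.mpr h1')
        by_contra hcc
        push_neg at hcc
        exact hvB ⟨h2, hcc⟩
      · exact_mod_cast hbz
      · exact_mod_cast hz
    · refine ⟨(⊥ : EReal), ⟨bot_lt_iff_ne_bot.mpr (by simp), Or.inl ⟨rfl, ?_, ?_⟩⟩, ?_, ?_⟩
      · simpa [Rval] using L_le_Rinf R htl htr hmx hRi
      · intro v h1 h2
        by_contra hcc
        push_neg at hcc
        exact hBne ⟨v, h2, hcc⟩
      · exact bot_lt_iff_ne_bot.mpr (by simp)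
      · exact_mod_cast hz

lemma Hfun_eq (R : ℝ → ℝ) {s Rinf : ℝ}
    (htl : ∀ a : ℝ, Filter.Tendsto R (nhdsWithin a (Set.Iio a)) (nhds (Function.leftLim R a)))
    (htr : ∀ a : ℝ, Filter.Tendsto R (nhdsWithin a (Set.Ioi a)) (nhds (Function.rightLim R a)))
    (hmx : MaxEqSelf R) (hRi : ∀ z : ℝ, z < s → R z ≤ Rinf)
    {z : EReal} (hzs : z < (s : EReal)) :
    Hfun R Rinf s z = if z = ⊥ then Rinf else
      max (Function.leftLim R s) (sSup (R '' Set.Ico z.toReal s)) := by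
  rcases eq_or_ne z ⊥ with rfl | hzb
  · rw [if_pos rfl]
    have h1 : ¬ ∃ x y : EReal, IsIsland R Rinf s x y ∧ x < (⊥ : EReal) ∧ (⊥ : EReal) ≤ y ∧
        y < (s : EReal) := by
      rintro ⟨x, y, -, hx, -⟩; exact absurd hx (by simp)
    have h2 : ¬ ∃ x : EReal, IsIsland R Rinf s x (s : EReal) ∧ x < (⊥ : EReal) ∧
        (⊥ : EReal) < (s : EReal) := by
      rintro ⟨x, -, hx, -⟩; exact absurd hx (by simp)
    simp only [Hfun, dif_neg h1, if_neg h2, Rval, if_pos rfl]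
    simp
  · -- z is real
    lift z to ℝ using ⟨ne_top_of_lt hzs, hzb⟩ with zr
    have hzrs : zr < s := by exact_mod_cast hzs
    rw [if_neg (by simp)]
    have hIcone : (Set.Ico zr s).Nonempty := ⟨zr, le_refl _, hzrs⟩
    have hbdd : BddAbove (R '' Set.Ico zr s) := bddAbove_image R htl htr hmx hRi (fun v hv => hv.2)
    simp only [Hfun, EReal.toReal_coe]
    split_ifs with h1 h2
    · -- case: in an island with y < s
      obtain ⟨hisl, hxz, hzy, hys⟩ := h1.choose_spec.choose_spec
      set x := h1.choose with hxdef
      set y := h1.choose_spec.choose with hydef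
      obtain ⟨hxy, hcase⟩ := hisl
      rcases hcase with ⟨hyeq, -⟩ | ⟨yr, hyeq, hyrs, hble, hLle, hltin, hleout⟩
      · rw [hyeq] at hys; exact absurd hys (lt_irrefl _)
      · rw [hyeq]
        simp only [EReal.toReal_coe]
        have hzyr : zr ≤ yr := by rw [hyeq] at hzy; exact_mod_cast hzy
        have hsup : sSup (R '' Set.Ico zr s) = R yr := by
          apply le_antisymm
          · refine csSup_le (hIcone.image R) ?_
            rintro v ⟨u, hu, rfl⟩
            rcases lt_trichotomy u yr with h | h | h
            · refine (hltin u ?_ ?_).le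
              · exact lt_of_lt_of_le hxz (by exact_mod_cast hu.1)
              · rw [hyeq]; exact_mod_cast h
            · rw [h]
            · exact hleout u h hu.2
          · exact le_csSup hbdd (Set.mem_image_of_mem R ⟨hzyr, hyrs⟩)
        rw [hsup, max_eq_right hLle]
    · -- case: in an island with right end s
      obtain ⟨x, hisl, hxz, -⟩ := h2
      have hsup : sSup (R '' Set.Ico zr s) ≤ Function.leftLim R s := by
        refine csSup_le (hIcone.image R) ?_
        rintro v ⟨u, hu, rfl⟩
        rcases hisl.2 with ⟨-, -, hlt⟩ | ⟨yr, hyeq, hyrs, -⟩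
        · exact (hlt u (lt_of_lt_of_le hxz (by exact_mod_cast hu.1)) hu.2).le
        · have : s = yr := by exact_mod_cast hyeq
          linarith
      rw [max_eq_left hsup]
    · -- no island
      have hno : ¬ (R zr < Function.leftLim R s ∨ ∃ u ∈ Set.Ioo zr s, R zr < R u) := by
        intro hcond
        rcases island_exists R htl htr hmx hRi hzrs hcond with h | h
        · exact h1 h
        · exact h2 h
      push_neg at hno
      obtain ⟨hL, hub⟩ := hno
      have hsup : sSup (R '' Set.Ico zr s) = R zr := by
        apply le_antisymm
        · refine csSup_le (hIcone.image R) ?_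
          rintro v ⟨u, hu, rfl⟩
          rcases eq_or_lt_of_le hu.1 with h | h
          · rw [← h]
          · exact hub u ⟨h, hu.2⟩
        · exact le_csSup hbdd (Set.mem_image_of_mem R ⟨le_refl _, hzrs⟩)
      rw [Rval, if_neg (by simp), EReal.toReal_coe, hsup, max_eq_right hL]

lemma tendsto_sSup_Ico (R : ℝ → ℝ) {s Rinf : ℝ}
    (htl : ∀ a : ℝ, Filter.Tendsto R (nhdsWithin a (Set.Iio a)) (nhds (Function.leftLim R a)))
    (htr : ∀ a : ℝ, Filter.Tendsto R (nhdsWithin a (Set.Ioi a)) (nhds (Function.rightLim R a)))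
    (hmx : MaxEqSelf R) (hRi : ∀ z : ℝ, z < s → R z ≤ Rinf)
    {a : ℝ} (has : a ≤ s) :
    Tendsto (fun w : ℝ => sSup (R '' Set.Ico w a)) (𝓝[<] a) (𝓝 (Function.leftLim R a)) := by
  rw [Metric.tendsto_nhds]
  intro ε hε
  have hhalf : 0 < ε / 2 := by linarith
  have hev : ∀ᶠ u in 𝓝[<] a, dist (R u) (Function.leftLim R a) < ε / 2 :=
    Metric.tendsto_nhds.mp (htl a) (ε / 2) hhalf
  obtain ⟨l', hl', hsub⟩ :=
    (mem_nhdsLT_iff_exists_Ioo_subset' (show a - 1 < a by linarith)).mp hev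
  filter_upwards [Ioo_mem_nhdsLT hl'] with w hw
  have hne : (Set.Ico w a).Nonempty := ⟨w, le_refl _, hw.2⟩
  have hbdd : BddAbove (R '' Set.Ico w a) := bddAbove_image R htl htr hmx hRi (fun v hv => lt_of_lt_of_le hv.2 has)
  have hub : sSup (R '' Set.Ico w a) ≤ Function.leftLim R a + ε / 2 := by
    refine csSup_le (hne.image R) ?_
    rintro v ⟨u, hu, rfl⟩
    have : dist (R u) (Function.leftLim R a) < ε / 2 :=
      hsub ⟨lt_of_lt_of_le hw.1 hu.1, hu.2⟩
    rw [Real.dist_eq] at this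
    have := abs_lt.mp this
    linarith [this.2]
  have hlb : Function.leftLim R a - ε / 2 ≤ sSup (R '' Set.Ico w a) := by
    have hwmem : dist (R w) (Function.leftLim R a) < ε / 2 := hsub ⟨hw.1, hw.2⟩
    rw [Real.dist_eq] at hwmem
    have := abs_lt.mp hwmem
    have hRw : Function.leftLim R a - ε / 2 ≤ R w := by linarith [this.1]
    exact hRw.trans (le_csSup hbdd (Set.mem_image_of_mem R ⟨le_refl _, hw.2⟩))
  rw [Real.dist_eq, abs_lt]
  constructor <;> linarith

lemma part1 (R : ℝ → ℝ) {s Rinf : ℝ}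
    (htl : ∀ a : ℝ, Filter.Tendsto R (nhdsWithin a (Set.Iio a)) (nhds (Function.leftLim R a)))
    (htr : ∀ a : ℝ, Filter.Tendsto R (nhdsWithin a (Set.Ioi a)) (nhds (Function.rightLim R a)))
    (hmx : MaxEqSelf R) (hRi : ∀ z : ℝ, z < s → R z ≤ Rinf) :
    ∀ x y : EReal, x < y → y < (s : EReal) → Hfun R Rinf s y ≤ Hfun R Rinf s x := by
  intro x y hxy hys
  have hxs : x < (s : EReal) := hxy.trans hys
  rw [Hfun_eq R htl htr hmx hRi hys, Hfun_eq R htl htr hmx hRi hxs]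
  have hyb : y ≠ ⊥ := fun h => absurd (h ▸ hxy) (by simp)
  have hyt : y ≠ ⊤ := ne_top_of_lt hys
  have hyr : y = ((y.toReal : ℝ) : EReal) := (EReal.coe_toReal hyt hyb).symm
  have hyts : y.toReal < s := by
    rw [hyr] at hys; exact_mod_cast hys
  have hIcone : (Set.Ico y.toReal s).Nonempty := ⟨y.toReal, le_refl _, hyts⟩
  rcases eq_or_ne x ⊥ with rfl | hxb
  · rw [if_pos rfl, if_neg hyb]
    refine max_le (L_le_Rinf R htl htr hmx hRi) ?_
    refine csSup_le (hIcone.image R) ?_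
    rintro v ⟨u, hu, rfl⟩
    exact hRi u hu.2
  · rw [if_neg hxb, if_neg hyb]
    have hxt : x ≠ ⊤ := ne_top_of_lt hxs
    have hxr : x = ((x.toReal : ℝ) : EReal) := (EReal.coe_toReal hxt hxb).symm
    have hxy' : x.toReal ≤ y.toReal := by
      rw [hxr, hyr] at hxy; exact_mod_cast hxy.le
    refine max_le (le_max_left _ _) (le_max_of_le_right ?_)
    refine csSup_le_csSup (bddAbove_image R htl htr hmx hRi (fun v hv => hv.2)) (hIcone.image R) ?_
    exact Set.image_mono (Set.Ico_subset_Ico_left hxy')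

lemma part2 (R : ℝ → ℝ) {s Rinf : ℝ}
    (htl : ∀ a : ℝ, Filter.Tendsto R (nhdsWithin a (Set.Iio a)) (nhds (Function.leftLim R a)))
    (htr : ∀ a : ℝ, Filter.Tendsto R (nhdsWithin a (Set.Ioi a)) (nhds (Function.rightLim R a)))
    (hmx : MaxEqSelf R) (hRi : ∀ z : ℝ, z < s → R z ≤ Rinf) :
    ∀ z : ℝ, z < s →
    Tendsto (fun w : ℝ => Hfun R Rinf s (w : EReal)) (nhdsWithin z (Set.Iio z))
      (nhds (Hfun R Rinf s (z : EReal))) := by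
  intro z hz
  set L := Function.leftLim R s with hL
  set Sz := sSup (R '' Set.Ico z s) with hSz
  have hHz : Hfun R Rinf s (z : EReal) = max L Sz := by
    rw [Hfun_eq R htl htr hmx hRi (by exact_mod_cast hz)]
    simp [hSz]
    rfl
  have hzS : R z ≤ Sz := le_csSup (bddAbove_image R htl htr hmx hRi (fun v hv => hv.2))
    (Set.mem_image_of_mem R ⟨le_refl _, hz⟩)
  have hlLz : Function.leftLim R z ≤ Sz := le_trans (hmx z).1 hzS
  have htend : Tendsto (fun w : ℝ => max L (max (sSup (R '' Set.Ico w z)) Sz)) (𝓝[<] z)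
      (𝓝 (max L (max (Function.leftLim R z) Sz))) :=
    tendsto_const_nhds.max ((tendsto_sSup_Ico R htl htr hmx hRi hz.le).max tendsto_const_nhds)
  rw [hHz]
  have hval : max L (max (Function.leftLim R z) Sz) = max L Sz := by
    rw [max_eq_right hlLz]
  rw [← hval]
  refine Tendsto.congr' ?_ htend
  filter_upwards [self_mem_nhdsWithin] with w (hw : w < z)
  have hws : (w : EReal) < (s : EReal) := by exact_mod_cast hw.trans hz
  rw [Hfun_eq R htl htr hmx hRi hws, if_neg (by simp)]
  have hsplit : Set.Ico w z ∪ Set.Ico z s = Set.Ico w s :=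
    Set.Ico_union_Ico_eq_Ico hw.le hz.le
  have h1 : (Set.Ico w z).Nonempty := ⟨w, le_refl _, hw⟩
  have h2 : (Set.Ico z s).Nonempty := ⟨z, le_refl _, hz⟩
  have hb1 : BddAbove (R '' Set.Ico w z) := bddAbove_image R htl htr hmx hRi (fun v hv => hv.2.trans hz)
  have hb2 : BddAbove (R '' Set.Ico z s) := bddAbove_image R htl htr hmx hRi (fun v hv => hv.2)
  rw [EReal.toReal_coe, ← hsplit, Set.image_union,
    csSup_union hb1 (h1.image R) hb2 (h2.image R)]

lemma part3 (R : ℝ → ℝ) {s Rinf : ℝ}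
    (htl : ∀ a : ℝ, Filter.Tendsto R (nhdsWithin a (Set.Iio a)) (nhds (Function.leftLim R a)))
    (htr : ∀ a : ℝ, Filter.Tendsto R (nhdsWithin a (Set.Ioi a)) (nhds (Function.rightLim R a)))
    (hmx : MaxEqSelf R) (hRi : ∀ z : ℝ, z < s → R z ≤ Rinf) :
    Tendsto (fun w : ℝ => Hfun R Rinf s (w : EReal)) (nhdsWithin s (Set.Iio s))
    (nhds (Function.leftLim R s)) := by
  have htend : Tendsto (fun w : ℝ => max (Function.leftLim R s) (sSup (R '' Set.Ico w s)))
      (𝓝[<] s) (𝓝 (max (Function.leftLim R s) (Function.leftLim R s))) :=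
    tendsto_const_nhds.max (tendsto_sSup_Ico R htl htr hmx hRi (le_refl s))
  rw [max_self] at htend
  refine Tendsto.congr' ?_ htend
  filter_upwards [self_mem_nhdsWithin] with w (hw : w < s)
  rw [Hfun_eq R htl htr hmx hRi (by exact_mod_cast hw : (w : EReal) < (s : EReal)), if_neg (by simp),
    EReal.toReal_coe]

end IslandsAux

/-- Lemma 3.6:  `H` is nonincreasing on `[-∞, s)`, it is left-continuous on `(-∞, s)`,
and `H(y) → R₋(s)` as `y → s⁻`. -/
theorem Hfun_monotone_leftContinuous (R f um up : ℝ → ℝ) (h : IsUseful R f um up)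
    (hmax : MaxEqSelf R) (s Rinf : ℝ) (hRinf : ∀ z : ℝ, z < s → R z ≤ Rinf) :
    (∀ x y : EReal, x < y → y < (s : EReal) → Hfun R Rinf s y ≤ Hfun R Rinf s x) ∧
    (∀ z : ℝ, z < s →
      Tendsto (fun w : ℝ => Hfun R Rinf s (w : EReal)) (nhdsWithin z (Set.Iio z))
        (nhds (Hfun R Rinf s (z : EReal)))) ∧
    Tendsto (fun w : ℝ => Hfun R Rinf s (w : EReal)) (nhdsWithin s (Set.Iio s))
      (nhds (Function.leftLim R s)) := by
  have htl := h.tendsto_leftLim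
  have htr := h.tendsto_rightLim
  refine ⟨part1 R htl htr hmax hRinf, part2 R htl htr hmax hRinf, part3 R htl htr hmax hRinf⟩

end
end
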